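/- Let t > 0 be a real number. For i = 1, 2, let G⁺ᵢ be a finite simple graph with a vertex vᵢ, let Gᵢ = G⁺ᵢ − vᵢ, and suppose that both G⁺ᵢ and Gᵢ are t-tough. Let U be a graph on the disjoint union of the vertex sets of G₁ and G₂ such that the induced subgraph of U on V(Gᵢ) equals Gᵢ for i = 1, 2, every edge of U joining V(G₁) to V(G₂) joins a vertex of N(v₁) (the neighbourhood of v₁ in G⁺₁) to a vertex of N(v₂) (the neighbourhood of v₂ in G⁺₂), and in U every vertex of N(v₁) has at least t neighbours in N(v₂) and every vertex of N(v₂) has at least t neighbours in N(v₁). Then U is t-tough. -/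

import Mathlib

/-- The number of connected components of the subgraph of `G` induced on the
complement of the vertex set `S` (i.e. of `G − S`). -/
noncomputable def numComponents {V : Type*} (G : SimpleGraph V) (S : Set V) : ℕ :=
  Nat.card (G.induce Sᶜ).ConnectedComponent

/-- A graph `G` is `t`-tough if for every set `S` of vertices whose removal
disconnects the graph, one has `|S| ≥ t · c(G − S)`. -/
def IsTough {V : Type*} (t : ℝ) (G : SimpleGraph V) : Prop :=
  ∀ S : Set V, ¬ (G.induce Sᶜ).Connected → t * (numComponents G S : ℝ) ≤ (S.ncard : ℝ)

lemma isolated_eq_of_reachable {W : Type*} {G : SimpleGraph W} {v w : W}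
    (h : ∀ y, ¬ G.Adj v y) (r : G.Reachable v w) : v = w := by
  obtain ⟨p⟩ := r
  cases p with
  | nil => rfl
  | cons h' _ => exact absurd h' (h _)

lemma reachable_transfer {W W' : Type*} {G : SimpleGraph W} {G' : SimpleGraph W'}
    (f : W' → W) (hinj : Function.Injective f)
    (hadj : ∀ a b, G.Adj (f a) (f b) → G'.Adj a b) :
    ∀ {u v : W} (p : G.Walk u v), (∀ w ∈ p.support, ∃ a, f a = w) →
      ∀ x y, f x = u → f y = v → G'.Reachable x y := by
  intro u v p
  induction p with
  | nil =>
    intro _ x y hx hy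
    have : x = y := hinj (hx.trans hy.symm)
    exact this ▸ SimpleGraph.Reachable.refl x
  | @cons u v w h p ih =>
    intro hsupp x y hx hy
    obtain ⟨z, hz⟩ : ∃ a, f a = v := hsupp v (by simp [SimpleGraph.Walk.support_cons])
    have h1 : G'.Adj x z := hadj x z (by rwa [hx, hz])
    have h2 : G'.Reachable z y := by
      refine ih ?_ z y hz hy
      intro w hw
      exact hsupp w (by simp [SimpleGraph.Walk.support_cons, hw])
    exact h1.reachable.trans h2

lemma not_connected_of_two_le {W : Type*} {G : SimpleGraph W}
    (h : 2 ≤ Nat.card G.ConnectedComponent) : ¬ G.Connected := by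
  intro hc
  have hsub := hc.preconnected.subsingleton_connectedComponent
  have hne : Nonempty G.ConnectedComponent := ⟨G.connectedComponentMk hc.nonempty.some⟩
  have : Nat.card G.ConnectedComponent = 1 := Nat.card_eq_one_iff_unique.mpr ⟨hsub, hne⟩
  omega

lemma connected_of_card_eq_one {W : Type*} {G : SimpleGraph W}
    (h : Nat.card G.ConnectedComponent = 1) : G.Connected := by
  obtain ⟨hs, hne⟩ := Nat.card_eq_one_iff_unique.mp h
  obtain ⟨C⟩ := hne
  obtain ⟨v, -⟩ := C.exists_rep
  have : Nonempty W := ⟨v⟩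
  exact ⟨fun x y => SimpleGraph.ConnectedComponent.exact (hs.elim _ _)⟩

lemma comp_finite {W : Type*} [Finite W] (G : SimpleGraph W) :
    Finite G.ConnectedComponent :=
  Finite.of_surjective G.connectedComponentMk (fun C => C.exists_rep)

lemma isolated_vertex_bound {V : Type*} [Fintype V] {t : ℝ} (ht : 0 < t)
    (G : SimpleGraph V) (v : V) (h : IsTough t G) (S' : Set ({v}ᶜ : Set V))
    (hP : ∀ a : ({v}ᶜ : Set V), G.Adj v a.1 → a ∈ S')
    (hk : 1 ≤ numComponents (G.induce {v}ᶜ) S') :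
    t * ((numComponents (G.induce {v}ᶜ) S' : ℝ) + 1) ≤ (S'.ncard : ℝ) := by
  classical
  set K := (G.induce ({v}ᶜ : Set V)).induce S'ᶜ with hKdef
  haveI : Finite K.ConnectedComponent := comp_finite K
  set S'' : Set V := Subtype.val '' S' with hS''def
  have hvS'' : v ∈ S''ᶜ := by
    rintro ⟨a, -, ha⟩
    exact a.2 (Set.mem_singleton_iff.mpr ha)
  set GX := G.induce S''ᶜ with hGXdef
  haveI : Finite GX.ConnectedComponent := comp_finite GX
  set v' : ↑S''ᶜ := ⟨v, hvS''⟩ with hv'def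
  have hiso : ∀ y : ↑S''ᶜ, ¬ GX.Adj v' y := by
    intro y hadj
    have hGadj : G.Adj v y.1 := hadj
    have hyne : y.1 ∈ ({v}ᶜ : Set V) := fun e => G.irrefl (show G.Adj v v from e ▸ hGadj)
    have : (⟨y.1, hyne⟩ : ({v}ᶜ : Set V)) ∈ S' := hP ⟨y.1, hyne⟩ hGadj
    exact y.2 ⟨_, this, rfl⟩
  have hmem : ∀ x : ↑(S'ᶜ), (x.1.1 : V) ∈ S''ᶜ := by
    rintro x ⟨a, ha, hval⟩
    exact x.2 (by rwa [show a = x.1 from Subtype.ext hval] at ha)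
  set f : ↑(S'ᶜ) → ↑S''ᶜ := fun x => ⟨x.1.1, hmem x⟩ with hfdef
  have hfinj : Function.Injective f := by
    intro a b hab
    exact Subtype.ext (Subtype.ext (congrArg (fun z : ↑S''ᶜ => z.1) hab))
  have hfadj : ∀ a b : ↑(S'ᶜ), GX.Adj (f a) (f b) → K.Adj a b := fun a b hab => hab
  set g : K →g GX := ⟨f, fun hab => hab⟩ with hgdef
  set ψ : K.ConnectedComponent → GX.ConnectedComponent := SimpleGraph.ConnectedComponent.map g
    with hψdef
  have hne_v : ∀ x : ↑(S'ᶜ), f x ≠ v' := by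
    intro x he
    exact x.1.2 (congrArg Subtype.val he)
  have hψinj : Function.Injective ψ := by
    intro D D' hDD'
    obtain ⟨x, rfl⟩ := D.exists_rep
    obtain ⟨y, rfl⟩ := D'.exists_rep
    have hr : GX.Reachable (f x) (f y) := SimpleGraph.ConnectedComponent.exact hDD'
    obtain ⟨p⟩ := hr
    have hsup : ∀ w ∈ p.support, ∃ a : ↑(S'ᶜ), f a = w := by
      intro w hw
      have hwr : GX.Reachable (f x) w := ⟨p.takeUntil w hw⟩
      have hwv : w ≠ v' := by
        rintro rfl
        exact hne_v x (isolated_eq_of_reachable hiso hwr.symm).symm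
      have hw1 : w.1 ∈ ({v}ᶜ : Set V) := fun e => hwv (Subtype.ext e)
      have hw2 : (⟨w.1, hw1⟩ : ({v}ᶜ : Set V)) ∉ S' := fun hs => w.2 ⟨_, hs, rfl⟩
      exact ⟨⟨⟨w.1, hw1⟩, hw2⟩, rfl⟩
    exact SimpleGraph.ConnectedComponent.sound
      (reachable_transfer f hfinj hfadj p hsup x y rfl rfl)
  have hv'range : ∀ D, ψ D ≠ GX.connectedComponentMk v' := by
    intro D hD
    obtain ⟨x, rfl⟩ := D.exists_rep
    have hr : GX.Reachable v' (f x) := (SimpleGraph.ConnectedComponent.exact hD).symm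
    exact hne_v x (isolated_eq_of_reachable hiso hr).symm
  set F : K.ConnectedComponent ⊕ Unit → GX.ConnectedComponent := fun z =>
    match z with
    | Sum.inl D => ψ D
    | Sum.inr _ => GX.connectedComponentMk v'
    with hFdef
  have hFinj : Function.Injective F := by
    rintro (D | u) (D' | u') hzz
    · exact congrArg Sum.inl (hψinj hzz)
    · exact absurd hzz (hv'range D)
    · exact absurd hzz.symm (hv'range D')
    · rfl
  have hcard : Nat.card K.ConnectedComponent + 1 ≤ Nat.card GX.ConnectedComponent := by
    have := Nat.card_le_card_of_injective F hFinj
    simpa [Nat.card_sum] using this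
  -- K has a component
  have hKne : Nonempty K.ConnectedComponent := by
    have hk' : 0 < Nat.card K.ConnectedComponent := hk
    exact (Nat.card_pos_iff.mp hk').1
  obtain ⟨D⟩ := hKne
  obtain ⟨x, -⟩ := D.exists_rep
  have hnc : ¬ GX.Connected := by
    intro hc
    exact hne_v x (isolated_eq_of_reachable hiso (hc.preconnected v' (f x))).symm
  have hmain := h S'' hnc
  have hineq : ((numComponents (G.induce {v}ᶜ) S' : ℝ) + 1) ≤ (numComponents G S'' : ℝ) := by
    have : numComponents G S'' = Nat.card GX.ConnectedComponent := rfl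
    rw [this]
    exact_mod_cast hcard
  have hnc2 : (S''.ncard : ℝ) = (S'.ncard : ℝ) := by
    norm_cast
    rw [hS''def]
    exact Set.ncard_image_of_injective S' Subtype.val_injective
  nlinarith [hmain]

lemma gluing_endgame_low (t s₁ s₂ : ℝ) (ht : 0 < t) (hs₁ : 0 ≤ s₁) (hs₂ : 0 ≤ s₂)
    (c k₁ k₂ m : ℕ) (hc : 2 ≤ c) (hck : c + m ≤ k₁ + k₂)
    (P₁ P₂ : Prop)
    (T2 : 2 ≤ k₂ → t * k₂ ≤ s₂)
    (E1 : 1 ≤ k₁ → P₁ → t * (k₁ + 1) ≤ s₁) (E2 : 1 ≤ k₂ → P₂ → t * (k₂ + 1) ≤ s₂)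
    (D1 : ¬P₁ → m = 0 → t ≤ s₂) (D2 : ¬P₂ → m = 0 → t ≤ s₁)
    (hk₁ : k₁ ≤ 1) : t * c ≤ s₁ + s₂ := by
  have tk2 : c ≤ k₂ → t * c ≤ s₁ + s₂ := by
    intro h
    have h2 : 2 ≤ k₂ := le_trans hc h
    have : t * c ≤ t * k₂ := by
      apply mul_le_mul_of_nonneg_left _ ht.le
      exact_mod_cast h
    linarith [T2 h2]
  rcases Nat.eq_zero_or_pos k₁ with h0 | h1
  · exact tk2 (by omega)
  have hk1 : k₁ = 1 := by omega
  rcases Nat.eq_zero_or_pos m with hm | hm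
  swap
  · exact tk2 (by omega)
  -- m = 0, k₁ = 1, c ≤ 1 + k₂
  have hck2 : c ≤ 1 + k₂ := by omega
  have hck2' : (c : ℝ) ≤ 1 + (k₂ : ℝ) := by exact_mod_cast hck2
  have hc' : (2:ℝ) ≤ (c:ℝ) := by exact_mod_cast hc
  by_cases hP₁ : P₁
  · have e1 : t * 2 ≤ s₁ := by
      have := E1 (by omega) hP₁; rw [hk1] at this; norm_num at this; linarith
    rcases le_or_gt 2 k₂ with h2 | h2
    · have := T2 h2
      nlinarith
    · have : c = 2 := by omega
      rw [this]; norm_num; linarith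
  · have d1 : t ≤ s₂ := D1 hP₁ hm
    by_cases hP₂ : P₂
    · have hk2 : 1 ≤ k₂ := by omega
      have := E2 hk2 hP₂
      have : t * c ≤ t * (k₂ + 1) := by
        apply mul_le_mul_of_nonneg_left _ ht.le
        push_cast; linarith
      linarith [E2 hk2 hP₂]
    · have d2 : t ≤ s₁ := D2 hP₂ hm
      rcases le_or_gt 2 k₂ with h2 | h2
      · have := T2 h2
        nlinarith
      · have : c = 2 := by omega
        rw [this]; norm_num; linarith

lemma gluing_endgame (t s₁ s₂ : ℝ) (ht : 0 < t) (hs₁ : 0 ≤ s₁) (hs₂ : 0 ≤ s₂)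
    (c k₁ k₂ m : ℕ) (hc : 2 ≤ c) (hck : c + m ≤ k₁ + k₂)
    (P₁ P₂ : Prop)
    (T1 : 2 ≤ k₁ → t * k₁ ≤ s₁) (T2 : 2 ≤ k₂ → t * k₂ ≤ s₂)
    (E1 : 1 ≤ k₁ → P₁ → t * (k₁ + 1) ≤ s₁) (E2 : 1 ≤ k₂ → P₂ → t * (k₂ + 1) ≤ s₂)
    (D1 : ¬P₁ → m = 0 → t ≤ s₂) (D2 : ¬P₂ → m = 0 → t ≤ s₁) :
    t * c ≤ s₁ + s₂ := by
  rcases le_or_gt k₁ 1 with h | h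
  · exact gluing_endgame_low t s₁ s₂ ht hs₁ hs₂ c k₁ k₂ m hc hck P₁ P₂ T2 E1 E2 D1 D2 h
  rcases le_or_gt k₂ 1 with h' | h'
  · rw [add_comm s₁ s₂]
    exact gluing_endgame_low t s₂ s₁ ht hs₂ hs₁ c k₂ k₁ m hc (by omega) P₂ P₁ T1 E2 E1 D2 D1 h'
  · have := T1 h
    have := T2 h'
    have : t * c ≤ t * (k₁ + k₂) := by
      apply mul_le_mul_of_nonneg_left _ ht.le
      push_cast; exact_mod_cast (by omega : c ≤ k₁ + k₂)
    push_cast at this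
    nlinarith [T1 h, T2 h']

/-- A component of `H = U.induce Sᶜ` touches the left side. -/
def touchLeft {W₁ W₂ : Type*} (G : SimpleGraph (W₁ ⊕ W₂)) (S : Set (W₁ ⊕ W₂))
    (C : (G.induce Sᶜ).ConnectedComponent) : Prop :=
  ∃ (a : W₁) (h : Sum.inl a ∈ Sᶜ), (G.induce Sᶜ).connectedComponentMk ⟨Sum.inl a, h⟩ = C

/-- A component of `H = U.induce Sᶜ` touches the right side. -/
def touchRight {W₁ W₂ : Type*} (G : SimpleGraph (W₁ ⊕ W₂)) (S : Set (W₁ ⊕ W₂))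
    (C : (G.induce Sᶜ).ConnectedComponent) : Prop :=
  ∃ (b : W₂) (h : Sum.inr b ∈ Sᶜ), (G.induce Sᶜ).connectedComponentMk ⟨Sum.inr b, h⟩ = C


/-- Gluing two `t`-tough graphs: if `G⁺ᵢ` and `Gᵢ = G⁺ᵢ − vᵢ` are `t`-tough
(`t > 0`), and `U` is obtained from the disjoint union of `G₁` and `G₂` by
adding edges joining `N(v₁)` to `N(v₂)` such that in `U` every vertex of
`N(v₁)` has at least `t` neighbours in `N(v₂)` and vice versa, then `U` is
`t`-tough. -/
theorem gluing_tough_graphs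
    {V₁ V₂ : Type*} [Fintype V₁] [Fintype V₂] (t : ℝ) (ht : 0 < t)
    (Gp₁ : SimpleGraph V₁) (Gp₂ : SimpleGraph V₂) (v₁ : V₁) (v₂ : V₂)
    (h₁ : IsTough t Gp₁) (h₂ : IsTough t Gp₂)
    (h₁' : IsTough t (Gp₁.induce {v₁}ᶜ)) (h₂' : IsTough t (Gp₂.induce {v₂}ᶜ))
    (U : SimpleGraph ((({v₁}ᶜ : Set V₁)) ⊕ (({v₂}ᶜ : Set V₂))))
    (hUl : ∀ a b : ({v₁}ᶜ : Set V₁),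
      U.Adj (Sum.inl a) (Sum.inl b) ↔ Gp₁.Adj a.1 b.1)
    (hUr : ∀ a b : ({v₂}ᶜ : Set V₂),
      U.Adj (Sum.inr a) (Sum.inr b) ↔ Gp₂.Adj a.1 b.1)
    (hcross : ∀ (a : ({v₁}ᶜ : Set V₁)) (b : ({v₂}ᶜ : Set V₂)),
      U.Adj (Sum.inl a) (Sum.inr b) → Gp₁.Adj v₁ a.1 ∧ Gp₂.Adj v₂ b.1)
    (hdeg₁ : ∀ a : ({v₁}ᶜ : Set V₁), Gp₁.Adj v₁ a.1 →
      t ≤ (({b : ({v₂}ᶜ : Set V₂) |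
        U.Adj (Sum.inl a) (Sum.inr b) ∧ Gp₂.Adj v₂ b.1}).ncard : ℝ))
    (hdeg₂ : ∀ b : ({v₂}ᶜ : Set V₂), Gp₂.Adj v₂ b.1 →
      t ≤ (({a : ({v₁}ᶜ : Set V₁) |
        U.Adj (Sum.inl a) (Sum.inr b) ∧ Gp₁.Adj v₁ a.1}).ncard : ℝ)) :
    IsTough t U := by
  classical
  intro S hS
  set S₁ : Set ({v₁}ᶜ : Set V₁) := {a | Sum.inl a ∈ S} with hS₁def
  set S₂ : Set ({v₂}ᶜ : Set V₂) := {b | Sum.inr b ∈ S} with hS₂def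
  have hHfin : Finite (U.induce Sᶜ).ConnectedComponent := comp_finite _
  have hK₁fin : Finite ((Gp₁.induce ({v₁}ᶜ : Set V₁)).induce S₁ᶜ).ConnectedComponent :=
    comp_finite _
  have hK₂fin : Finite ((Gp₂.induce ({v₂}ᶜ : Set V₂)).induce S₂ᶜ).ConnectedComponent :=
    comp_finite _
  -- trivial cases
  rcases Nat.lt_or_ge (numComponents U S) 2 with hlt | hc
  · rcases Nat.lt_or_ge (numComponents U S) 1 with h0 | h1
    · have hz : numComponents U S = 0 := by omega
      rw [hz]
      simp only [Nat.cast_zero, mul_zero]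
      positivity
    · have h1' : numComponents U S = 1 := by omega
      exact absurd (connected_of_card_eq_one h1') hS
  -- abbreviations
  have httr : ∀ C, touchLeft U S C ∨ touchRight U S C := by
    intro C
    obtain ⟨x, hx⟩ := C.exists_rep
    obtain ⟨val, hval⟩ := x
    cases val with
    | inl a => exact Or.inl ⟨a, hval, hx⟩
    | inr b => exact Or.inr ⟨b, hval, hx⟩
  have hMfin : Finite {C : (U.induce Sᶜ).ConnectedComponent //
      touchLeft U S C ∧ touchRight U S C} := Subtype.finite
  set m := Nat.card {C : (U.induce Sᶜ).ConnectedComponent //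
      touchLeft U S C ∧ touchRight U S C} with hmdef
  -- homomorphisms from the two side graphs into U − S
  set f₁ : (Gp₁.induce ({v₁}ᶜ : Set V₁)).induce S₁ᶜ →g U.induce Sᶜ :=
    ⟨fun a => ⟨Sum.inl a.1, a.2⟩, fun {a b} hab => (hUl a.1 b.1).mpr hab⟩ with hf₁def
  set f₂ : (Gp₂.induce ({v₂}ᶜ : Set V₂)).induce S₂ᶜ →g U.induce Sᶜ :=
    ⟨fun b => ⟨Sum.inr b.1, b.2⟩, fun {a b} hab => (hUr a.1 b.1).mpr hab⟩ with hf₂def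
  have hsec₁ : ∀ C : {C : (U.induce Sᶜ).ConnectedComponent // touchLeft U S C},
      ∃ D : ((Gp₁.induce ({v₁}ᶜ : Set V₁)).induce S₁ᶜ).ConnectedComponent,
        D.map f₁ = C.1 := by
    rintro ⟨C, a, haS, hC⟩
    exact ⟨((Gp₁.induce ({v₁}ᶜ : Set V₁)).induce S₁ᶜ).connectedComponentMk ⟨a, haS⟩, hC⟩
  have hsec₂ : ∀ C : {C : (U.induce Sᶜ).ConnectedComponent // touchRight U S C},
      ∃ D : ((Gp₂.induce ({v₂}ᶜ : Set V₂)).induce S₂ᶜ).ConnectedComponent,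
        D.map f₂ = C.1 := by
    rintro ⟨C, b, hbS, hC⟩
    exact ⟨((Gp₂.induce ({v₂}ᶜ : Set V₂)).induce S₂ᶜ).connectedComponentMk ⟨b, hbS⟩, hC⟩
  set σ₁ := fun C => (hsec₁ C).choose with hσ₁def
  have hσ₁ : ∀ C, (σ₁ C).map f₁ = C.1 := fun C => (hsec₁ C).choose_spec
  set σ₂ := fun C => (hsec₂ C).choose with hσ₂def
  have hσ₂ : ∀ C, (σ₂ C).map f₂ = C.1 := fun C => (hsec₂ C).choose_spec
  have key₁ : ∀ X Y, σ₁ X = σ₁ Y → X.1 = Y.1 := by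
    intro X Y hXY
    rw [← hσ₁ X, ← hσ₁ Y, hXY]
  have key₂ : ∀ X Y, σ₂ X = σ₂ Y → X.1 = Y.1 := by
    intro X Y hXY
    rw [← hσ₂ X, ← hσ₂ Y, hXY]
  -- the injection giving c + m ≤ k₁ + k₂
  set F : (U.induce Sᶜ).ConnectedComponent ⊕ {C : (U.induce Sᶜ).ConnectedComponent //
        touchLeft U S C ∧ touchRight U S C} →
      ((Gp₁.induce ({v₁}ᶜ : Set V₁)).induce S₁ᶜ).ConnectedComponent ⊕
        ((Gp₂.induce ({v₂}ᶜ : Set V₂)).induce S₂ᶜ).ConnectedComponent :=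
    Sum.elim (fun C =>
        if h : touchLeft U S C then Sum.inl (σ₁ ⟨C, h⟩)
        else Sum.inr (σ₂ ⟨C, (httr C).resolve_left h⟩))
      (fun M => Sum.inr (σ₂ ⟨M.1, M.2.2⟩)) with hFdef
  have hFinj : Function.Injective F := by
    rintro (C | M) (C' | M') hzz <;>
      simp only [hFdef, Sum.elim_inl, Sum.elim_inr] at hzz
    · by_cases h : touchLeft U S C
      · by_cases h' : touchLeft U S C'
        · rw [dif_pos h, dif_pos h'] at hzz
          exact congrArg Sum.inl (key₁ ⟨C, h⟩ ⟨C', h'⟩ (Sum.inl_injective hzz))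
        · rw [dif_pos h, dif_neg h'] at hzz
          exact absurd hzz (by simp)
      · by_cases h' : touchLeft U S C'
        · rw [dif_neg h, dif_pos h'] at hzz
          exact absurd hzz (by simp)
        · rw [dif_neg h, dif_neg h'] at hzz
          exact congrArg Sum.inl (key₂ _ _ (Sum.inr_injective hzz))
    · exfalso
      by_cases h : touchLeft U S C
      · rw [dif_pos h] at hzz
        simp at hzz
      · rw [dif_neg h] at hzz
        have hCeq : C = M'.1 :=
          key₂ ⟨C, (httr C).resolve_left h⟩ ⟨M'.1, M'.2.2⟩ (Sum.inr_injective hzz)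
        rw [hCeq] at h
        exact h M'.2.1
    · exfalso
      by_cases h' : touchLeft U S C'
      · rw [dif_pos h'] at hzz
        simp at hzz
      · rw [dif_neg h'] at hzz
        have hCeq : C' = M.1 :=
          key₂ ⟨C', (httr C').resolve_left h'⟩ ⟨M.1, M.2.2⟩ (Sum.inr_injective hzz.symm)
        rw [hCeq] at h'
        exact h' M.2.1
    · exact congrArg Sum.inr (Subtype.ext (key₂ _ _ (Sum.inr_injective hzz)))
  -- the key cardinality inequality c + m ≤ k₁ + k₂
  have hckm : numComponents U S + m ≤
      numComponents (Gp₁.induce ({v₁}ᶜ : Set V₁)) S₁ +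
        numComponents (Gp₂.induce ({v₂}ᶜ : Set V₂)) S₂ := by
    have hmain := Nat.card_le_card_of_injective F hFinj
    rw [Nat.card_sum, Nat.card_sum] at hmain
    exact hmain
  -- the degree conditions give the D-facts
  have hD1 : ¬(∀ a : ({v₁}ᶜ : Set V₁), Gp₁.Adj v₁ a.1 → a ∈ S₁) → m = 0 →
      t ≤ (S₂.ncard : ℝ) := by
    intro hP hm
    push_neg at hP
    obtain ⟨a, hadj, haS⟩ := hP
    have hsub : {b : ({v₂}ᶜ : Set V₂) |
        U.Adj (Sum.inl a) (Sum.inr b) ∧ Gp₂.Adj v₂ b.1} ⊆ S₂ := by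
      intro b hb
      by_contra hbS
      have hx : Sum.inl a ∈ Sᶜ := haS
      have hy : Sum.inr b ∈ Sᶜ := hbS
      have hadjH : (U.induce Sᶜ).Adj ⟨Sum.inl a, hx⟩ ⟨Sum.inr b, hy⟩ := hb.1
      have hmix : touchLeft U S ((U.induce Sᶜ).connectedComponentMk ⟨Sum.inl a, hx⟩) ∧
          touchRight U S ((U.induce Sᶜ).connectedComponentMk ⟨Sum.inl a, hx⟩) :=
        ⟨⟨a, hx, rfl⟩, ⟨b, hy,
          (SimpleGraph.ConnectedComponent.connectedComponentMk_eq_of_adj hadjH).symm⟩⟩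
      haveI : Nonempty {C : (U.induce Sᶜ).ConnectedComponent //
          touchLeft U S C ∧ touchRight U S C} := ⟨⟨_, hmix⟩⟩
      have hpos : 0 < m := Nat.card_pos
      omega
    have h2 : ({b : ({v₂}ᶜ : Set V₂) |
        U.Adj (Sum.inl a) (Sum.inr b) ∧ Gp₂.Adj v₂ b.1}).ncard ≤ S₂.ncard :=
      Set.ncard_le_ncard hsub S₂.toFinite
    calc t ≤ _ := hdeg₁ a hadj
      _ ≤ (S₂.ncard : ℝ) := by exact_mod_cast h2
  have hD2 : ¬(∀ b : ({v₂}ᶜ : Set V₂), Gp₂.Adj v₂ b.1 → b ∈ S₂) → m = 0 →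
      t ≤ (S₁.ncard : ℝ) := by
    intro hP hm
    push_neg at hP
    obtain ⟨b, hadj, hbS⟩ := hP
    have hsub : {a : ({v₁}ᶜ : Set V₁) |
        U.Adj (Sum.inl a) (Sum.inr b) ∧ Gp₁.Adj v₁ a.1} ⊆ S₁ := by
      intro a ha
      by_contra haS
      have hx : Sum.inl a ∈ Sᶜ := haS
      have hy : Sum.inr b ∈ Sᶜ := hbS
      have hadjH : (U.induce Sᶜ).Adj ⟨Sum.inl a, hx⟩ ⟨Sum.inr b, hy⟩ := ha.1
      have hmix : touchLeft U S ((U.induce Sᶜ).connectedComponentMk ⟨Sum.inl a, hx⟩) ∧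
          touchRight U S ((U.induce Sᶜ).connectedComponentMk ⟨Sum.inl a, hx⟩) :=
        ⟨⟨a, hx, rfl⟩, ⟨b, hy,
          (SimpleGraph.ConnectedComponent.connectedComponentMk_eq_of_adj hadjH).symm⟩⟩
      haveI : Nonempty {C : (U.induce Sᶜ).ConnectedComponent //
          touchLeft U S C ∧ touchRight U S C} := ⟨⟨_, hmix⟩⟩
      have hpos : 0 < m := Nat.card_pos
      omega
    have h2 : ({a : ({v₁}ᶜ : Set V₁) |
        U.Adj (Sum.inl a) (Sum.inr b) ∧ Gp₁.Adj v₁ a.1}).ncard ≤ S₁.ncard :=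
      Set.ncard_le_ncard hsub S₁.toFinite
    calc t ≤ _ := hdeg₂ b hadj
      _ ≤ (S₁.ncard : ℝ) := by exact_mod_cast h2
  -- toughness facts
  have hT1 : 2 ≤ numComponents (Gp₁.induce ({v₁}ᶜ : Set V₁)) S₁ →
      t * (numComponents (Gp₁.induce ({v₁}ᶜ : Set V₁)) S₁ : ℝ) ≤ (S₁.ncard : ℝ) :=
    fun h2 => h₁' S₁ (not_connected_of_two_le h2)
  have hT2 : 2 ≤ numComponents (Gp₂.induce ({v₂}ᶜ : Set V₂)) S₂ →
      t * (numComponents (Gp₂.induce ({v₂}ᶜ : Set V₂)) S₂ : ℝ) ≤ (S₂.ncard : ℝ) :=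
    fun h2 => h₂' S₂ (not_connected_of_two_le h2)
  have hE1 : 1 ≤ numComponents (Gp₁.induce ({v₁}ᶜ : Set V₁)) S₁ →
      (∀ a : ({v₁}ᶜ : Set V₁), Gp₁.Adj v₁ a.1 → a ∈ S₁) →
      t * ((numComponents (Gp₁.induce ({v₁}ᶜ : Set V₁)) S₁ : ℝ) + 1) ≤ (S₁.ncard : ℝ) :=
    fun hk hp => isolated_vertex_bound ht Gp₁ v₁ h₁ S₁ hp hk
  have hE2 : 1 ≤ numComponents (Gp₂.induce ({v₂}ᶜ : Set V₂)) S₂ →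
      (∀ b : ({v₂}ᶜ : Set V₂), Gp₂.Adj v₂ b.1 → b ∈ S₂) →
      t * ((numComponents (Gp₂.induce ({v₂}ᶜ : Set V₂)) S₂ : ℝ) + 1) ≤ (S₂.ncard : ℝ) :=
    fun hk hp => isolated_vertex_bound ht Gp₂ v₂ h₂ S₂ hp hk
  -- splitting the cardinality of S
  have hSsplit : S.ncard = S₁.ncard + S₂.ncard := by
    have hU : S = (Sum.inl '' S₁) ∪ (Sum.inr '' S₂) := by
      ext x
      cases x with
      | inl a =>
        simp only [Set.mem_union, Set.mem_image, hS₁def, hS₂def, Set.mem_setOf_eq]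
        constructor
        · intro hx
          exact Or.inl ⟨a, hx, rfl⟩
        · rintro (⟨a', ha', he⟩ | ⟨b', hb', he⟩)
          · obtain rfl : a' = a := Sum.inl_injective he
            exact ha'
          · exact absurd he (by simp)
      | inr b =>
        simp only [Set.mem_union, Set.mem_image, hS₁def, hS₂def, Set.mem_setOf_eq]
        constructor
        · intro hx
          exact Or.inr ⟨b, hx, rfl⟩
        · rintro (⟨a', ha', he⟩ | ⟨b', hb', he⟩)
          · exact absurd he (by simp)
          · obtain rfl : b' = b := Sum.inr_injective he
            exact hb'
    rw [hU, Set.ncard_union_eq ?_ (Set.toFinite _) (Set.toFinite _),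
      Set.ncard_image_of_injective _ Sum.inl_injective,
      Set.ncard_image_of_injective _ Sum.inr_injective]
    rw [Set.disjoint_left]
    rintro x ⟨a, -, rfl⟩ ⟨b, -, he⟩
    cases he
  have hfinal := gluing_endgame t (S₁.ncard : ℝ) (S₂.ncard : ℝ) ht
    (by positivity) (by positivity)
    (numComponents U S) (numComponents (Gp₁.induce ({v₁}ᶜ : Set V₁)) S₁)
    (numComponents (Gp₂.induce ({v₂}ᶜ : Set V₂)) S₂) m hc hckm
    (∀ a : ({v₁}ᶜ : Set V₁), Gp₁.Adj v₁ a.1 → a ∈ S₁)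
    (∀ b : ({v₂}ᶜ : Set V₂), Gp₂.Adj v₂ b.1 → b ∈ S₂)
    hT1 hT2 hE1 hE2 hD1 hD2
  rw [hSsplit]
  push_cast
  linarith
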